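/- For fixed natural numbers m ≥ 1 and n ≥ 1, the set U_{m,n} = { R ∈ Ext(S) : μ({x : ρ(C(x,n,R), Id) < 1/m}) > 0 } is open in Ext(S) with respect to the Halmos metric, where C(x,n,R) = T_{S^{n-1}x} ∘ ... ∘ T_{Sx} ∘ T_x is the n-th cocycle of the skew product R = (S, T_x). -/

import Mathlib

open MeasureTheory Set

/-- A measure-preserving automorphism of `(X, μ)`. -/
structure Aut (X : Type*) [MeasurableSpace X] (μ : Measure X) where
  toEquiv : X ≃ᵐ X
  mp : MeasurePreserving toEquiv μ μ

namespace Aut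

variable {X : Type*} [MeasurableSpace X] {μ : Measure X}

/-- The identity automorphism. -/
def id (μ : Measure X) : Aut X μ := ⟨MeasurableEquiv.refl X, MeasurePreserving.id μ⟩

/-- Composition of automorphisms: `(a.comp b) x = a (b x)`. -/
def comp (a b : Aut X μ) : Aut X μ :=
  ⟨b.toEquiv.trans a.toEquiv, a.mp.comp b.mp⟩

/-- Inverse automorphism. -/
def inv (a : Aut X μ) : Aut X μ := ⟨a.toEquiv.symm, a.mp.symm a.toEquiv⟩

end Aut

/-- The Halmos (pseudo)metric on `Aut X μ` associated with a fixed family `A`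
of measurable sets (dense in the measure algebra):
`ρ(S,T) = Σ_i 2^{-i} (μ(S A_i Δ T A_i) + μ(S⁻¹ A_i Δ T⁻¹ A_i))`. -/
noncomputable def halmos {X : Type*} [MeasurableSpace X] {μ : Measure X}
    (A : ℕ → Set X) (S T : Aut X μ) : ℝ :=
  ∑' i : ℕ, (1 / 2 : ℝ) ^ i *
    ((μ (symmDiff (S.toEquiv '' A i) (T.toEquiv '' A i))).toReal +
     (μ (symmDiff (S.toEquiv.symm '' A i) (T.toEquiv.symm '' A i))).toReal)

/-- A skew product over `S`: an automorphism `R` of the product space together with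
a measurable family of fiber automorphisms `T x` such that `R(x,y) = (Sx, T_x y)`. -/
structure SkewExt {X : Type*} [MeasurableSpace X] {μ : Measure X} (S : Aut X μ) where
  T : X → Aut X μ
  prod : Aut (X × X) (μ.prod μ)
  spec : ∀ p : X × X, prod.toEquiv p = (S.toEquiv p.1, (T p.1).toEquiv p.2)

/-- `R ∈ Ext(S)`: `R` is a skew product over `S` for some measurable family of fibers. -/
def IsSkewProduct {X : Type*} [MeasurableSpace X] {μ : Measure X}
    (S : Aut X μ) (R : Aut (X × X) (μ.prod μ)) : Prop :=
  ∃ T : X → Aut X μ, ∀ p : X × X, R.toEquiv p = (S.toEquiv p.1, (T p.1).toEquiv p.2)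

/-- The `n`-step cocycle `C(x,n,R) = T_{S^{n-1}x} ∘ ⋯ ∘ T_{Sx} ∘ T_x`. -/
noncomputable def cocycle {X : Type*} [MeasurableSpace X] {μ : Measure X}
    (S : Aut X μ) (T : X → Aut X μ) (x : X) : ℕ → Aut X μ
  | 0 => Aut.id μ
  | n + 1 => (T (S.toEquiv^[n] x)).comp (cocycle S T x n)

/-- Openness of a set with respect to a (pseudo)metric `d`. -/
def IsOpenWrt {Z : Type*} (d : Z → Z → ℝ) (U : Set Z) : Prop :=
  ∀ z ∈ U, ∃ ε > (0 : ℝ), ∀ w, d z w < ε → w ∈ U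

/-- `D` is a `G_δ` set with respect to the (pseudo)metric `d`. -/
def IsGdeltaWrt {Z : Type*} (d : Z → Z → ℝ) (D : Set Z) : Prop :=
  ∃ U : ℕ → Set Z, (∀ k, IsOpenWrt d (U k)) ∧ D = ⋂ k, U k

/-- `D` is dense with respect to the (pseudo)metric `d`. -/
def IsDenseWrt {Z : Type*} (d : Z → Z → ℝ) (D : Set Z) : Prop :=
  ∀ z : Z, ∀ ε > (0 : ℝ), ∃ w ∈ D, d z w < ε

/-- `S` is aperiodic: for every `n ≥ 1` the set of `n`-periodic points is null. -/
def Aperiodic {X : Type*} [MeasurableSpace X] {μ : Measure X} (S : Aut X μ) : Prop :=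
  ∀ n : ℕ, 1 ≤ n → μ {x : X | S.toEquiv^[n] x = x} = 0

/-- The trivial extension `S × Id`. -/
def prodId {X : Type*} [MeasurableSpace X] {μ : Measure X} [SFinite μ] (S : Aut X μ) :
    Aut (X × X) (μ.prod μ) :=
  ⟨S.toEquiv.prodCongr (MeasurableEquiv.refl X), S.mp.prod (MeasurePreserving.id μ)⟩

/-- Membership in `𝒥`: automorphisms of the product leaving every `A × X` invariant. -/
def MemJ {X : Type*} [MeasurableSpace X] {μ : Measure X}
    (J : Aut (X × X) (μ.prod μ)) : Prop :=
  ∀ A : Set X, MeasurableSet A → J.toEquiv '' (A ×ˢ (univ : Set X)) = A ×ˢ (univ : Set X)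



section Aux
open scoped symmDiff

variable {Y : Type*} [MeasurableSpace Y] {ν : Measure Y}

namespace Aut

lemma measure_preimage' (a : Aut Y ν) {s : Set Y} (hs : MeasurableSet s) :
    ν (a.toEquiv ⁻¹' s) = ν s :=
  a.mp.measure_preimage hs.nullMeasurableSet

lemma measure_image' (a : Aut Y ν) {s : Set Y} (hs : MeasurableSet s) :
    ν (a.toEquiv '' s) = ν s := by
  rw [← MeasurableEquiv.preimage_symm]
  exact (a.mp.symm a.toEquiv).measure_preimage hs.nullMeasurableSet

lemma comp_apply (a b : Aut Y ν) (x : Y) : (a.comp b).toEquiv x = a.toEquiv (b.toEquiv x) := rfl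

lemma inv_toEquiv (a : Aut Y ν) : a.inv.toEquiv = a.toEquiv.symm := rfl

end Aut

lemma toReal_measure_le_one [IsProbabilityMeasure ν] (s : Set Y) : (ν s).toReal ≤ 1 := by
  have h : ν s ≤ 1 := prob_le_one
  simpa using ENNReal.toReal_mono ENNReal.one_ne_top h

lemma rmeas_symmDiff_triangle [IsFiniteMeasure ν] (s t u : Set Y) :
    (ν (s ∆ u)).toReal ≤ (ν (s ∆ t)).toReal + (ν (t ∆ u)).toReal := by
  rw [← ENNReal.toReal_add (measure_ne_top _ _) (measure_ne_top _ _)]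
  exact ENNReal.toReal_mono (by finiteness) (measure_symmDiff_le s t u)

lemma halmos_summable [IsProbabilityMeasure ν] (A : ℕ → Set Y) (P Q : Aut Y ν) :
    Summable (fun i : ℕ => (1 / 2 : ℝ) ^ i *
      ((ν (symmDiff (P.toEquiv '' A i) (Q.toEquiv '' A i))).toReal +
       (ν (symmDiff (P.toEquiv.symm '' A i) (Q.toEquiv.symm '' A i))).toReal)) := by
  refine Summable.of_nonneg_of_le (fun i => by positivity) (fun i => ?_)
    (summable_geometric_two.mul_right 2)
  have h1 := toReal_measure_le_one (ν := ν) (symmDiff (P.toEquiv '' A i) (Q.toEquiv '' A i))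
  have h2 := toReal_measure_le_one (ν := ν)
    (symmDiff (P.toEquiv.symm '' A i) (Q.toEquiv.symm '' A i))
  have : (0:ℝ) ≤ (1/2:ℝ)^i := by positivity
  nlinarith

lemma halmos_nonneg (A : ℕ → Set Y) (P Q : Aut Y ν) : 0 ≤ halmos A P Q :=
  tsum_nonneg (fun i => by positivity)

lemma halmos_comm (A : ℕ → Set Y) (P Q : Aut Y ν) : halmos A P Q = halmos A Q P := by
  unfold halmos
  exact tsum_congr fun i => by rw [symmDiff_comm, symmDiff_comm (P.toEquiv.symm '' A i)]

lemma halmos_triangle [IsProbabilityMeasure ν] (A : ℕ → Set Y) (P Q R : Aut Y ν) :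
    halmos A P R ≤ halmos A P Q + halmos A Q R := by
  unfold halmos
  rw [← Summable.tsum_add (halmos_summable A P Q) (halmos_summable A Q R)]
  refine Summable.tsum_le_tsum (fun i => ?_) (halmos_summable A P R)
    ((halmos_summable A P Q).add (halmos_summable A Q R))
  have h1 := rmeas_symmDiff_triangle (ν := ν) (P.toEquiv '' A i) (Q.toEquiv '' A i)
    (R.toEquiv '' A i)
  have h2 := rmeas_symmDiff_triangle (ν := ν) (P.toEquiv.symm '' A i) (Q.toEquiv.symm '' A i)
    (R.toEquiv.symm '' A i)
  have : (0:ℝ) ≤ (1/2:ℝ)^i := by positivity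
  nlinarith

lemma halmos_inv (A : ℕ → Set Y) (P Q : Aut Y ν) :
    halmos A P.inv Q.inv = halmos A P Q := by
  unfold halmos
  refine tsum_congr fun i => ?_
  simp only [Aut.inv_toEquiv, MeasurableEquiv.symm_symm]
  ring

lemma halmos_symm_image_le [IsProbabilityMeasure ν] (A : ℕ → Set Y) (P Q : Aut Y ν) (j : ℕ) :
    (ν (symmDiff (P.toEquiv.symm '' A j) (Q.toEquiv.symm '' A j))).toReal ≤
      2 ^ j * halmos A P Q := by
  have hterm : (1/2:ℝ)^j *
      ((ν (symmDiff (P.toEquiv '' A j) (Q.toEquiv '' A j))).toReal +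
       (ν (symmDiff (P.toEquiv.symm '' A j) (Q.toEquiv.symm '' A j))).toReal) ≤
      halmos A P Q :=
    Summable.le_tsum (halmos_summable A P Q) j (fun i _ => by positivity)
  have hpow : (2:ℝ)^j * (1/2:ℝ)^j = 1 := by
    rw [← mul_pow]; norm_num
  have h0 : (0:ℝ) ≤ (ν (symmDiff (P.toEquiv '' A j) (Q.toEquiv '' A j))).toReal :=
    ENNReal.toReal_nonneg
  have h2 : (0:ℝ) < (2:ℝ)^j := by positivity
  calc (ν (symmDiff (P.toEquiv.symm '' A j) (Q.toEquiv.symm '' A j))).toReal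
      ≤ (ν (symmDiff (P.toEquiv '' A j) (Q.toEquiv '' A j))).toReal +
        (ν (symmDiff (P.toEquiv.symm '' A j) (Q.toEquiv.symm '' A j))).toReal :=
        le_add_of_nonneg_left h0
    _ = (2:ℝ)^j * ((1/2:ℝ)^j *
        ((ν (symmDiff (P.toEquiv '' A j) (Q.toEquiv '' A j))).toReal +
         (ν (symmDiff (P.toEquiv.symm '' A j) (Q.toEquiv.symm '' A j))).toReal)) := by
        rw [← mul_assoc, hpow, one_mul]
    _ ≤ 2 ^ j * halmos A P Q := mul_le_mul_of_nonneg_left hterm h2.le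

end Aux

section Aux2
open scoped symmDiff

variable {Y : Type*} [MeasurableSpace Y] {ν : Measure Y}

lemma exists_forall_lt_aux {p : ℕ → ℝ → Prop}
    (hp : ∀ i ε ε', 0 < ε' → ε' ≤ ε → p i ε → p i ε')
    (h : ∀ i, ∃ ε > (0:ℝ), p i ε) (N : ℕ) : ∃ ε > (0:ℝ), ∀ i < N, p i ε := by
  induction N with
  | zero => exact ⟨1, one_pos, fun i hi => absurd hi (Nat.not_lt_zero i)⟩
  | succ N ih =>
    obtain ⟨ε, hε, hgood⟩ := ih
    obtain ⟨ε', hε', hp'⟩ := h N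
    refine ⟨min ε ε', lt_min hε hε', fun i hi => ?_⟩
    rcases Nat.lt_succ_iff_lt_or_eq.mp hi with h' | rfl
    · exact hp i ε _ (lt_min hε hε') (min_le_left _ _) (hgood i h')
    · exact hp i ε' _ (lt_min hε hε') (min_le_right _ _) hp'

lemma key_lemma [IsProbabilityMeasure ν] (A₂ : ℕ → Set Y) (hA₂m : ∀ i, MeasurableSet (A₂ i))
    (hA₂d : ∀ B : Set Y, MeasurableSet B → ∀ ε > (0 : ℝ),
      ∃ i, ν (symmDiff B (A₂ i)) < ENNReal.ofReal ε)
    (P : Aut Y ν) {B : Set Y} (hB : MeasurableSet B) (n : ℕ) :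
    ∀ θ : ℝ, 0 < θ → ∃ ε > (0:ℝ), ∀ Q : Aut Y ν, halmos A₂ P Q < ε →
      (ν (symmDiff (P.toEquiv^[n] ⁻¹' B) (Q.toEquiv^[n] ⁻¹' B))).toReal < θ := by
  induction n with
  | zero =>
    intro θ hθ
    exact ⟨1, one_pos, fun Q _ => by simpa [symmDiff_self] using hθ⟩
  | succ n ih =>
    intro θ hθ
    obtain ⟨ε₁, hε₁, h₁⟩ := ih (θ/6) (by positivity)
    set C : Set Y := P.toEquiv^[n] ⁻¹' B with hCdef
    have hCm : MeasurableSet C := (P.toEquiv.measurable.iterate n) hB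
    obtain ⟨j, hj⟩ := hA₂d C hCm (θ/12) (by positivity)
    have hjr : (ν (symmDiff C (A₂ j))).toReal < θ/12 :=
      ENNReal.toReal_lt_of_lt_ofReal hj
    refine ⟨min ε₁ ((θ/6) * (1/2)^j), lt_min hε₁ (by positivity), fun Q hQ => ?_⟩
    have hQ1 : halmos A₂ P Q < ε₁ := lt_of_lt_of_le hQ (min_le_left _ _)
    have hQ2 : halmos A₂ P Q < (θ/6) * (1/2)^j := lt_of_lt_of_le hQ (min_le_right _ _)
    set D : Set Y := Q.toEquiv^[n] ⁻¹' B with hDdef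
    have hDm : MeasurableSet D := (Q.toEquiv.measurable.iterate n) hB
    have ha : (ν (symmDiff C D)).toReal < θ/6 := h₁ Q hQ1
    -- rewrite iterate succ
    have hre : ∀ R : Aut Y ν, (R.toEquiv^[n+1]) ⁻¹' B = R.toEquiv ⁻¹' (R.toEquiv^[n] ⁻¹' B) := by
      intro R
      rw [Function.iterate_succ]
      rfl
    rw [hre P, hre Q, ← hCdef, ← hDdef]
    -- middle term bound
    have hmid : (ν (symmDiff (P.toEquiv ⁻¹' A₂ j) (Q.toEquiv ⁻¹' A₂ j))).toReal < θ/6 := by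
      have hb := halmos_symm_image_le A₂ P Q j
      rw [MeasurableEquiv.image_symm, MeasurableEquiv.image_symm] at hb
      calc (ν (symmDiff (P.toEquiv ⁻¹' A₂ j) (Q.toEquiv ⁻¹' A₂ j))).toReal
          ≤ 2 ^ j * halmos A₂ P Q := hb
        _ < 2 ^ j * ((θ/6) * (1/2)^j) := by
            apply mul_lt_mul_of_pos_left hQ2 (by positivity)
        _ = θ/6 * ((2:ℝ)^j * (1/2)^j) := by ring
        _ = θ/6 := by rw [← mul_pow]; norm_num
    -- preimage measure equalities
    have hPpre : ∀ s t : Set Y, MeasurableSet s → MeasurableSet t →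
        (ν (symmDiff (P.toEquiv ⁻¹' s) (P.toEquiv ⁻¹' t))).toReal = (ν (symmDiff s t)).toReal := by
      intro s t hs ht
      rw [← Set.preimage_symmDiff, P.measure_preimage' (hs.symmDiff ht)]
    have hQpre : ∀ s t : Set Y, MeasurableSet s → MeasurableSet t →
        (ν (symmDiff (Q.toEquiv ⁻¹' s) (Q.toEquiv ⁻¹' t))).toReal = (ν (symmDiff s t)).toReal := by
      intro s t hs ht
      rw [← Set.preimage_symmDiff, Q.measure_preimage' (hs.symmDiff ht)]
    calc (ν (symmDiff (P.toEquiv ⁻¹' C) (Q.toEquiv ⁻¹' D))).toReal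
        ≤ (ν (symmDiff (P.toEquiv ⁻¹' C) (Q.toEquiv ⁻¹' C))).toReal +
          (ν (symmDiff (Q.toEquiv ⁻¹' C) (Q.toEquiv ⁻¹' D))).toReal :=
          rmeas_symmDiff_triangle _ _ _
      _ ≤ ((ν (symmDiff (P.toEquiv ⁻¹' C) (P.toEquiv ⁻¹' A₂ j))).toReal +
           (ν (symmDiff (P.toEquiv ⁻¹' A₂ j) (Q.toEquiv ⁻¹' A₂ j))).toReal +
           (ν (symmDiff (Q.toEquiv ⁻¹' A₂ j) (Q.toEquiv ⁻¹' C))).toReal) +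
          (ν (symmDiff (Q.toEquiv ⁻¹' C) (Q.toEquiv ⁻¹' D))).toReal := by
          gcongr
          calc (ν (symmDiff (P.toEquiv ⁻¹' C) (Q.toEquiv ⁻¹' C))).toReal
              ≤ (ν (symmDiff (P.toEquiv ⁻¹' C) (P.toEquiv ⁻¹' A₂ j))).toReal +
                (ν (symmDiff (P.toEquiv ⁻¹' A₂ j) (Q.toEquiv ⁻¹' C))).toReal :=
                rmeas_symmDiff_triangle _ _ _
            _ ≤ (ν (symmDiff (P.toEquiv ⁻¹' C) (P.toEquiv ⁻¹' A₂ j))).toReal +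
                ((ν (symmDiff (P.toEquiv ⁻¹' A₂ j) (Q.toEquiv ⁻¹' A₂ j))).toReal +
                 (ν (symmDiff (Q.toEquiv ⁻¹' A₂ j) (Q.toEquiv ⁻¹' C))).toReal) := by
                gcongr
                exact rmeas_symmDiff_triangle _ _ _
            _ = _ := by ring
      _ < θ := by
          rw [hPpre C (A₂ j) hCm (hA₂m j), hQpre (A₂ j) C (hA₂m j) hCm,
            hQpre C D hCm hDm]
          have h1 : (ν (symmDiff (A₂ j) C)).toReal < θ/12 := by
            rwa [symmDiff_comm]
          linarith

end Aux2

section Aux3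
open scoped symmDiff

variable {X : Type*} [MeasurableSpace X] {μ : Measure X} {S : Aut X μ}

lemma prod_iterate (E : SkewExt S) (k : ℕ) (p : X × X) :
    E.prod.toEquiv^[k] p = (S.toEquiv^[k] p.1, (cocycle S E.T p.1 k).toEquiv p.2) := by
  induction k with
  | zero => rfl
  | succ k ih =>
    rw [Function.iterate_succ_apply', ih, E.spec, Function.iterate_succ_apply']
    rfl

lemma iterate_symm_cancel {Z : Type*} [MeasurableSpace Z] (e : Z ≃ᵐ Z) (k : ℕ) (z : Z) :
    e^[k] ((⇑e.symm)^[k] z) = z := by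
  have h : Function.LeftInverse ⇑e ⇑e.symm := e.apply_symm_apply
  exact (h.iterate k) z

lemma symm_iterate_cancel {Z : Type*} [MeasurableSpace Z] (e : Z ≃ᵐ Z) (k : ℕ) (z : Z) :
    (⇑e.symm)^[k] (e^[k] z) = z := by
  have h : Function.LeftInverse ⇑e.symm ⇑e := e.symm_apply_apply
  exact (h.iterate k) z

lemma prod_inv_iterate (E : SkewExt S) (k : ℕ) (p : X × X) :
    E.prod.inv.toEquiv^[k] p =
      ((⇑S.toEquiv.symm)^[k] p.1,
        (cocycle S E.T ((⇑S.toEquiv.symm)^[k] p.1) k).toEquiv.symm p.2) := by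
  have hinj : Function.Injective (⇑E.prod.toEquiv)^[k] := E.prod.toEquiv.injective.iterate k
  apply hinj
  have h1 : (⇑E.prod.toEquiv)^[k] (E.prod.inv.toEquiv^[k] p) = p := by
    rw [Aut.inv_toEquiv]
    exact iterate_symm_cancel E.prod.toEquiv k p
  rw [h1, prod_iterate]
  simp [iterate_symm_cancel]

lemma section_W (E : SkewExt S) (B : Set X) (k : ℕ) (x : X) :
    Prod.mk x ⁻¹' ((⇑E.prod.toEquiv)^[k] ⁻¹' ((Set.univ : Set X) ×ˢ B)) =
      (cocycle S E.T x k).toEquiv ⁻¹' B := by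
  ext y
  simp [prod_iterate, Set.mem_prod]

lemma section_V (E : SkewExt S) (B : Set X) (k : ℕ) (x : X) :
    Prod.mk (S.toEquiv^[k] x) ⁻¹' ((⇑E.prod.inv.toEquiv)^[k] ⁻¹' ((Set.univ : Set X) ×ˢ B)) =
      (cocycle S E.T x k).toEquiv '' B := by
  ext y
  simp only [Set.mem_preimage, prod_inv_iterate, Set.mem_prod, Set.mem_univ, true_and,
    symm_iterate_cancel, ← MeasurableEquiv.preimage_symm]

end Aux3

section Aux4
open scoped symmDiff

variable {Y : Type*} [MeasurableSpace Y] {ν : Measure Y}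

lemma halmos_split [IsProbabilityMeasure ν] (A : ℕ → Set Y) (P Q : Aut Y ν) (N : ℕ) :
    halmos A P Q ≤
      (∑ i ∈ Finset.range N, (1 / 2 : ℝ) ^ i *
        ((ν (symmDiff (P.toEquiv '' A i) (Q.toEquiv '' A i))).toReal +
         (ν (symmDiff (P.toEquiv.symm '' A i) (Q.toEquiv.symm '' A i))).toReal))
      + 4 * (1/2 : ℝ) ^ N := by
  have hsf := halmos_summable A P Q
  have hfun : ∀ i : ℕ, (1/2:ℝ)^(i+N)*2 = (1/2:ℝ)^i * ((1/2:ℝ)^N*2) := by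
    intro i; rw [pow_add]; ring
  have hsg : Summable (fun i : ℕ => (1/2:ℝ)^(i+N)*2) := by
    simp_rw [hfun]; exact summable_geometric_two.mul_right _
  have htail : (∑' i : ℕ, (1/2:ℝ)^(i+N) *
      ((ν (symmDiff (P.toEquiv '' A (i+N)) (Q.toEquiv '' A (i+N)))).toReal +
       (ν (symmDiff (P.toEquiv.symm '' A (i+N)) (Q.toEquiv.symm '' A (i+N)))).toReal)) ≤
      4 * (1/2:ℝ)^N := by
    have hb : ∀ i : ℕ, (1/2:ℝ)^(i+N) *
        ((ν (symmDiff (P.toEquiv '' A (i+N)) (Q.toEquiv '' A (i+N)))).toReal +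
         (ν (symmDiff (P.toEquiv.symm '' A (i+N)) (Q.toEquiv.symm '' A (i+N)))).toReal) ≤
        (1/2:ℝ)^(i+N)*2 := by
      intro i
      have h1 := toReal_measure_le_one (ν := ν)
        (symmDiff (P.toEquiv '' A (i+N)) (Q.toEquiv '' A (i+N)))
      have h2 := toReal_measure_le_one (ν := ν)
        (symmDiff (P.toEquiv.symm '' A (i+N)) (Q.toEquiv.symm '' A (i+N)))
      have h0 : (0:ℝ) ≤ (1/2:ℝ)^(i+N) := by positivity
      nlinarith
    calc (∑' i : ℕ, (1/2:ℝ)^(i+N) *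
        ((ν (symmDiff (P.toEquiv '' A (i+N)) (Q.toEquiv '' A (i+N)))).toReal +
         (ν (symmDiff (P.toEquiv.symm '' A (i+N)) (Q.toEquiv.symm '' A (i+N)))).toReal))
        ≤ ∑' i : ℕ, (1/2:ℝ)^(i+N)*2 :=
          Summable.tsum_le_tsum hb ((summable_nat_add_iff N).2 hsf) hsg
      _ = 4 * (1/2:ℝ)^N := by
          simp_rw [hfun]
          rw [tsum_mul_right, tsum_geometric_two]
          ring
  have := Summable.sum_add_tsum_nat_add (f := fun i : ℕ => (1/2:ℝ)^i *
      ((ν (symmDiff (P.toEquiv '' A i) (Q.toEquiv '' A i))).toReal +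
       (ν (symmDiff (P.toEquiv.symm '' A i) (Q.toEquiv.symm '' A i))).toReal)) N hsf
  unfold halmos
  rw [← this]
  exact add_le_add_right htail _

end Aux4

open scoped symmDiff ENNReal in
/-- For fixed `m, n ≥ 1`, the set
`U_(m,n) = {R ∈ Ext(S) : μ {x : ρ(C(x,n,R), Id) < 1/m} > 0}` is open in `Ext(S)`
w.r.t. the Halmos metric. -/
theorem U_mn_open {X : Type*} [MeasurableSpace X] [StandardBorelSpace X]
    (μ : Measure X) [IsProbabilityMeasure μ] (S : Aut X μ)
    (A : ℕ → Set X) (hAm : ∀ i, MeasurableSet (A i))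
    (hAd : ∀ B : Set X, MeasurableSet B → ∀ ε > (0 : ℝ),
      ∃ i, μ (symmDiff B (A i)) < ENNReal.ofReal ε)
    (A₂ : ℕ → Set (X × X)) (hA₂m : ∀ i, MeasurableSet (A₂ i))
    (hA₂d : ∀ B : Set (X × X), MeasurableSet B → ∀ ε > (0 : ℝ),
      ∃ i, (μ.prod μ) (symmDiff B (A₂ i)) < ENNReal.ofReal ε)
    (m n : ℕ) (hm : 1 ≤ m) (hn : 1 ≤ n) :
    IsOpenWrt (fun E F : SkewExt S => halmos A₂ E.prod F.prod)
      {E : SkewExt S |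
        0 < μ {x : X | halmos A (cocycle S E.T x n) (Aut.id μ) < 1 / m}} := by
  intro E hE
  simp only [Set.mem_setOf_eq] at hE
  -- Step 1: find a level set of positive measure with some room α
  have hsub : {x : X | halmos A (cocycle S E.T x n) (Aut.id μ) < 1 / m} ⊆
      ⋃ k : ℕ, {x : X | halmos A (cocycle S E.T x n) (Aut.id μ) ≤ 1 / m - 1 / (k + 1)} := by
    intro x hx
    simp only [Set.mem_setOf_eq] at hx
    obtain ⟨k, hk⟩ := exists_nat_one_div_lt
      (show (0:ℝ) < 1 / m - halmos A (cocycle S E.T x n) (Aut.id μ) by linarith)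
    exact Set.mem_iUnion.2 ⟨k, by simp only [Set.mem_setOf_eq]; linarith⟩
  have hex : ∃ k : ℕ, μ {x : X | halmos A (cocycle S E.T x n) (Aut.id μ) ≤
      1 / m - 1 / (k + 1)} ≠ 0 := by
    by_contra hcon
    push_neg at hcon
    have hle := measure_mono (μ := μ) hsub
    have h0 : μ (⋃ k : ℕ, {x : X | halmos A (cocycle S E.T x n) (Aut.id μ) ≤
        1 / m - 1 / (k + 1)}) = 0 := measure_iUnion_null hcon
    rw [h0] at hle
    exact hE.ne' (le_antisymm hle (zero_le))
  obtain ⟨k, hδ⟩ := hex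
  set α : ℝ := 1 / (k + 1) with hαdef
  have hα : 0 < α := by positivity
  set B : Set X := {x : X | halmos A (cocycle S E.T x n) (Aut.id μ) ≤ 1 / m - α} with hBdef
  have hδtop : μ B ≠ ⊤ := measure_ne_top μ B
  have hδpos : 0 < (μ B).toReal := ENNReal.toReal_pos hδ hδtop
  -- Step 2: the truncation level N
  obtain ⟨N, hN⟩ := exists_pow_lt_of_lt_one (show (0:ℝ) < α / 8 by positivity)
    (show (1/2 : ℝ) < 1 by norm_num)
  -- Step 3: the target bound θ for the product-measure errors
  set θ : ℝ := (α/2) * (μ B).toReal / (2*N+1) with hθdef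
  have hθ : 0 < θ := by positivity
  -- Step 4: combine the key lemma over all i < N
  have hkey : ∀ i : ℕ, ∃ ε > (0:ℝ), ∀ F : SkewExt S, halmos A₂ E.prod F.prod < ε →
      ((μ.prod μ) (symmDiff ((⇑E.prod.toEquiv)^[n] ⁻¹' ((Set.univ : Set X) ×ˢ A i))
        ((⇑F.prod.toEquiv)^[n] ⁻¹' ((Set.univ : Set X) ×ˢ A i)))).toReal < θ ∧
      ((μ.prod μ) (symmDiff ((⇑E.prod.inv.toEquiv)^[n] ⁻¹' ((Set.univ : Set X) ×ˢ A i))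
        ((⇑F.prod.inv.toEquiv)^[n] ⁻¹' ((Set.univ : Set X) ×ˢ A i)))).toReal < θ := by
    intro i
    have hBm : MeasurableSet (((Set.univ : Set X)) ×ˢ A i) := MeasurableSet.univ.prod (hAm i)
    obtain ⟨ε1, hε1, h1⟩ := key_lemma A₂ hA₂m hA₂d E.prod hBm n θ hθ
    obtain ⟨ε2, hε2, h2⟩ := key_lemma A₂ hA₂m hA₂d E.prod.inv hBm n θ hθ
    refine ⟨min ε1 ε2, lt_min hε1 hε2, fun F hF =>
      ⟨h1 F.prod (lt_of_lt_of_le hF (min_le_left _ _)), ?_⟩⟩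
    apply h2 F.prod.inv
    rw [halmos_inv]
    exact lt_of_lt_of_le hF (min_le_right _ _)
  obtain ⟨ε, hε0, hεN⟩ := exists_forall_lt_aux
    (p := fun i ε => ∀ F : SkewExt S, halmos A₂ E.prod F.prod < ε →
      ((μ.prod μ) (symmDiff ((⇑E.prod.toEquiv)^[n] ⁻¹' ((Set.univ : Set X) ×ˢ A i))
        ((⇑F.prod.toEquiv)^[n] ⁻¹' ((Set.univ : Set X) ×ˢ A i)))).toReal < θ ∧
      ((μ.prod μ) (symmDiff ((⇑E.prod.inv.toEquiv)^[n] ⁻¹' ((Set.univ : Set X) ×ˢ A i))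
        ((⇑F.prod.inv.toEquiv)^[n] ⁻¹' ((Set.univ : Set X) ×ˢ A i)))).toReal < θ)
    (fun i ε ε' _ hle hp F hF => hp F (lt_of_lt_of_le hF hle)) hkey N
  refine ⟨ε, hε0, fun F hF => ?_⟩
  have hF' : halmos A₂ E.prod F.prod < ε := hF
  -- Step 5: the error sets and the error function H
  set DW : ℕ → Set (X × X) := fun i =>
    symmDiff ((⇑E.prod.toEquiv)^[n] ⁻¹' ((Set.univ : Set X) ×ˢ A i))
      ((⇑F.prod.toEquiv)^[n] ⁻¹' ((Set.univ : Set X) ×ˢ A i)) with hDWdef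
  set DV : ℕ → Set (X × X) := fun i =>
    symmDiff ((⇑E.prod.inv.toEquiv)^[n] ⁻¹' ((Set.univ : Set X) ×ˢ A i))
      ((⇑F.prod.inv.toEquiv)^[n] ⁻¹' ((Set.univ : Set X) ×ˢ A i)) with hDVdef
  have hDWm : ∀ i, MeasurableSet (DW i) := fun i =>
    ((E.prod.toEquiv.measurable.iterate n) (MeasurableSet.univ.prod (hAm i))).symmDiff
      ((F.prod.toEquiv.measurable.iterate n) (MeasurableSet.univ.prod (hAm i)))
  have hDVm : ∀ i, MeasurableSet (DV i) := fun i =>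
    ((E.prod.inv.toEquiv.measurable.iterate n) (MeasurableSet.univ.prod (hAm i))).symmDiff
      ((F.prod.inv.toEquiv.measurable.iterate n) (MeasurableSet.univ.prod (hAm i)))
  set w : ℕ → ℝ≥0∞ := fun i => ENNReal.ofReal ((1/2:ℝ)^i) with hwdef
  set φ : ℕ → X → ℝ≥0∞ := fun i x => μ (Prod.mk ((⇑S.toEquiv)^[n] x) ⁻¹' DV i) with hφdef
  set ψ : ℕ → X → ℝ≥0∞ := fun i x => μ (Prod.mk x ⁻¹' DW i) with hψdef
  set H : X → ℝ≥0∞ := fun x => ∑ i ∈ Finset.range N, w i * (φ i x + ψ i x) with hHdef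
  have hφm : ∀ i, Measurable (φ i) := fun i =>
    (measurable_measure_prodMk_left (hDVm i)).comp (S.toEquiv.measurable.iterate n)
  have hψm : ∀ i, Measurable (ψ i) := fun i => measurable_measure_prodMk_left (hDWm i)
  have hHm : Measurable H :=
    Finset.measurable_sum _ (fun i _ => ((hφm i).add (hψm i)).const_mul _)
  -- Step 6: the integral of H is small
  have hintφ : ∀ i, ∫⁻ x, φ i x ∂μ = (μ.prod μ) (DV i) := by
    intro i
    have hmp : MeasurePreserving ((⇑S.toEquiv)^[n] : X → X) μ μ := S.mp.iterate n
    calc ∫⁻ x, φ i x ∂μ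
        = ∫⁻ u, μ (Prod.mk u ⁻¹' DV i) ∂μ :=
          hmp.lintegral_comp (measurable_measure_prodMk_left (hDVm i))
      _ = (μ.prod μ) (DV i) := (Measure.prod_apply (hDVm i)).symm
  have hintψ : ∀ i, ∫⁻ x, ψ i x ∂μ = (μ.prod μ) (DW i) := fun i =>
    (Measure.prod_apply (hDWm i)).symm
  have hintH : ∫⁻ x, H x ∂μ < ENNReal.ofReal (α/2) * μ B := by
    have h1 : ∫⁻ x, H x ∂μ = ∑ i ∈ Finset.range N, w i * ((μ.prod μ) (DV i) + (μ.prod μ) (DW i)) := by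
      rw [hHdef]
      rw [lintegral_finset_sum _ (fun i _ => (show Measurable (fun x => w i * (φ i x + ψ i x)) from
        ((hφm i).add (hψm i)).const_mul _))]
      refine Finset.sum_congr rfl fun i _ => ?_
      rw [lintegral_const_mul _ (show Measurable (fun x => φ i x + ψ i x) from (hφm i).add (hψm i)),
        lintegral_add_left (hφm i),
        hintφ i, hintψ i]
    rw [h1]
    have hterm : ∀ i ∈ Finset.range N,
        w i * ((μ.prod μ) (DV i) + (μ.prod μ) (DW i)) ≤
          ENNReal.ofReal θ + ENNReal.ofReal θ := by
      intro i hi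
      obtain ⟨hW, hV⟩ := hεN i (Finset.mem_range.1 hi) F hF'
      have hw1 : w i ≤ 1 := ENNReal.ofReal_le_one.2 (pow_le_one₀ (by norm_num) (by norm_num))
      have hV' : (μ.prod μ) (DV i) ≤ ENNReal.ofReal θ :=
        le_of_lt ((ENNReal.lt_ofReal_iff_toReal_lt (measure_ne_top _ _)).2 hV)
      have hW' : (μ.prod μ) (DW i) ≤ ENNReal.ofReal θ :=
        le_of_lt ((ENNReal.lt_ofReal_iff_toReal_lt (measure_ne_top _ _)).2 hW)
      calc w i * ((μ.prod μ) (DV i) + (μ.prod μ) (DW i))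
          ≤ 1 * (ENNReal.ofReal θ + ENNReal.ofReal θ) :=
            mul_le_mul' hw1 (add_le_add hV' hW')
        _ = ENNReal.ofReal θ + ENNReal.ofReal θ := one_mul _
    calc ∑ i ∈ Finset.range N, w i * ((μ.prod μ) (DV i) + (μ.prod μ) (DW i))
        ≤ (Finset.range N).card • (ENNReal.ofReal θ + ENNReal.ofReal θ) :=
          Finset.sum_le_card_nsmul _ _ _ hterm
      _ = (N : ℝ≥0∞) * ENNReal.ofReal (2*θ) := by
          rw [Finset.card_range, nsmul_eq_mul, ← ENNReal.ofReal_add hθ.le hθ.le]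
          ring_nf
      _ = ENNReal.ofReal ((N:ℝ) * (2*θ)) := by
          rw [← ENNReal.ofReal_natCast N, ← ENNReal.ofReal_mul (Nat.cast_nonneg N)]
      _ < ENNReal.ofReal ((α/2) * (μ B).toReal) := by
          rw [ENNReal.ofReal_lt_ofReal_iff (by positivity)]
          have h2 : (α/2) * (μ B).toReal = (2*N+1) * θ := by
            rw [hθdef]; field_simp
          rw [h2]
          have : (0:ℝ) ≤ (N:ℝ) := Nat.cast_nonneg N
          nlinarith
      _ = ENNReal.ofReal (α/2) * μ B := by
          rw [ENNReal.ofReal_mul (by positivity), ENNReal.ofReal_toReal hδtop]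
  -- Step 7: Markov inequality
  set c : ℝ≥0∞ := ENNReal.ofReal (α/2) with hcdef
  have hc0 : c ≠ 0 := ne_of_gt (ENNReal.ofReal_pos.2 (by positivity))
  have hM : μ {x : X | c ≤ H x} < μ B := by
    calc μ {x : X | c ≤ H x} ≤ (∫⁻ x, H x ∂μ) / c :=
          meas_ge_le_lintegral_div hHm.aemeasurable hc0 ENNReal.ofReal_ne_top
      _ < μ B := by
          rw [ENNReal.div_lt_iff (Or.inl hc0) (Or.inl ENNReal.ofReal_ne_top), mul_comm]
          exact hintH
  -- Step 8: positive measure of good points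
  have hpos : 0 < μ (B ∩ {x : X | c ≤ H x}ᶜ) := by
    rcases eq_or_ne (μ (B ∩ {x : X | c ≤ H x}ᶜ)) 0 with h0 | h0
    · exfalso
      have hsub2 : B ⊆ (B ∩ {x : X | c ≤ H x}ᶜ) ∪ {x : X | c ≤ H x} := by
        intro x hx
        by_cases h : c ≤ H x
        · exact Or.inr h
        · exact Or.inl ⟨hx, h⟩
      have := (measure_mono (μ := μ) hsub2).trans (measure_union_le _ _)
      rw [h0, zero_add] at this
      exact lt_irrefl _ (lt_of_le_of_lt this hM)
    · exact pos_iff_ne_zero.2 h0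
  -- Step 9: good points satisfy the cocycle estimate for F
  refine lt_of_lt_of_le hpos (measure_mono (μ := μ) ?_)
  rintro x ⟨hxB, hxG⟩
  simp only [Set.mem_compl_iff, Set.mem_setOf_eq] at hxG
  have hxB' : halmos A (cocycle S E.T x n) (Aut.id μ) ≤ 1 / m - α := hxB
  have hHx : H x < c := lt_of_not_ge hxG
  have hHr : (H x).toReal < α/2 := ENNReal.toReal_lt_of_lt_ofReal hHx
  -- identify the sections
  have hφx : ∀ i, μ (Prod.mk ((⇑S.toEquiv)^[n] x) ⁻¹' DV i) =
      μ (symmDiff ((cocycle S E.T x n).toEquiv '' A i)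
      ((cocycle S F.T x n).toEquiv '' A i)) := by
    intro i
    simp only [hDVdef]
    rw [Set.preimage_symmDiff, section_V, section_V]
  have hψx : ∀ i, μ (Prod.mk x ⁻¹' DW i) =
      μ (symmDiff ((cocycle S E.T x n).toEquiv.symm '' A i)
      ((cocycle S F.T x n).toEquiv.symm '' A i)) := by
    intro i
    simp only [hDWdef]
    rw [Set.preimage_symmDiff, section_W, section_W,
      MeasurableEquiv.image_symm, MeasurableEquiv.image_symm]
  -- head sum equals (H x).toReal
  have hhead : ∑ i ∈ Finset.range N, (1/2:ℝ)^i *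
      ((μ (symmDiff ((cocycle S E.T x n).toEquiv '' A i)
          ((cocycle S F.T x n).toEquiv '' A i))).toReal +
       (μ (symmDiff ((cocycle S E.T x n).toEquiv.symm '' A i)
          ((cocycle S F.T x n).toEquiv.symm '' A i))).toReal) = (H x).toReal := by
    rw [hHdef]
    rw [ENNReal.toReal_sum (fun i _ => by
      refine ENNReal.mul_ne_top ENNReal.ofReal_ne_top ?_
      exact ENNReal.add_ne_top.2 ⟨measure_ne_top _ _, measure_ne_top _ _⟩)]
    refine Finset.sum_congr rfl fun i _ => ?_
    rw [ENNReal.toReal_mul, ENNReal.toReal_add (measure_ne_top _ _) (measure_ne_top _ _)]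
    rw [hφx i, hψx i]
    simp only [hwdef]
    rw [ENNReal.toReal_ofReal (by positivity)]
  -- final estimate
  have hsplit := halmos_split A (cocycle S E.T x n) (cocycle S F.T x n) N
  rw [hhead] at hsplit
  have htri : halmos A (cocycle S F.T x n) (Aut.id μ) ≤
      halmos A (cocycle S F.T x n) (cocycle S E.T x n) +
      halmos A (cocycle S E.T x n) (Aut.id μ) :=
    halmos_triangle A _ _ _
  rw [halmos_comm A (cocycle S F.T x n) (cocycle S E.T x n)] at htri
  show halmos A (cocycle S F.T x n) (Aut.id μ) < 1 / m
  have h4N : 4 * (1/2:ℝ)^N < α/2 := by linarith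
  linarith
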